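/- Suppose there exists a dense subset Θ ⊆ X* such that for every ξ ∈ Θ with ‖ξ‖ < γ, x̄ is a global minimizer of y ↦ f(y) − ⟨ξ, y⟩. Then x̄ is a sharp minimizer of f with modulus γ, i.e., f(x) ≥ f(x̄) + γ‖x − x̄‖ for all x ∈ X. -/

import Mathlib

/-- tilt invariance of minimality over a dense set of dual tilts
implies sharp minimality with modulus γ. -/
theorem dense_tilt_min_implies_sharp
    {X : Type*} [NormedAddCommGroup X] [NormedSpace ℝ X]
    (f : X → EReal) (hbot : ∀ x, f x ≠ ⊥) (xbar : X) (hdom : f xbar ≠ ⊤)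
    (γ : ℝ) (hγ : 0 < γ)
    (Θ : Set (X →L[ℝ] ℝ)) (hΘ : Dense Θ)
    (hmin : ∀ ξ ∈ Θ, ‖ξ‖ < γ →
      ∀ y : X, f xbar - ((ξ xbar : ℝ) : EReal) ≤ f y - ((ξ y : ℝ) : EReal)) :
    ∀ x : X, f xbar + ((γ * ‖x - xbar‖ : ℝ) : EReal) ≤ f x := by
  intro x
  rcases eq_or_ne x xbar with h | h
  · simp [h]
  rcases eq_or_ne (f x) ⊤ with htop | htop
  · simp [htop]
  set a := (f xbar).toReal with ha'
  set b := (f x).toReal with hb'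
  have ha : f xbar = (a : EReal) := (EReal.coe_toReal hdom (hbot xbar)).symm
  have hb : f x = (b : EReal) := (EReal.coe_toReal htop (hbot x)).symm
  set d := ‖x - xbar‖ with hd'
  have hd : 0 < d := norm_sub_pos_iff.mpr h
  rw [ha, hb, ← EReal.coe_add, EReal.coe_le_coe_iff]
  -- real goal: a + γ * d ≤ b
  refine le_of_forall_pos_le_add (fun ε hε => ?_)
  obtain ⟨g, hg1, hg2⟩ := exists_dual_vector ℝ (x - xbar) hd.ne'
  set δ : ℝ := min (ε / (2 * d)) γ with hδ'
  have hδpos : 0 < δ := lt_min (by positivity) hγ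
  have hδγ : δ ≤ γ := min_le_right _ _
  have hδε : 2 * δ * d ≤ ε := by
    have : δ ≤ ε / (2 * d) := min_le_left _ _
    calc 2 * δ * d ≤ 2 * (ε / (2 * d)) * d := by nlinarith
      _ = ε := by field_simp
  set ξ₀ : X →L[ℝ] ℝ := (γ - δ) • g with hξ₀'
  obtain ⟨ξ, hξball, hξΘ⟩ := Metric.dense_iff.mp hΘ ξ₀ (δ / 2) (by positivity)
  have hξd := hξball
  rw [Metric.mem_ball] at hξd
  have hξ₀norm : ‖ξ₀‖ = |γ - δ| := by
    have hns := norm_smul (γ - δ) g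
    rw [hg1, mul_one, Real.norm_eq_abs] at hns
    exact hns
  have habs : |γ - δ| = γ - δ := abs_of_nonneg (by linarith)
  have hξnorm : ‖ξ‖ < γ := by
    have := norm_le_norm_add_norm_sub' ξ ξ₀
    have hd2 : ‖ξ - ξ₀‖ < δ / 2 := by rwa [← dist_eq_norm]
    rw [hξ₀norm, habs] at this
    linarith
  have key := hmin ξ hξΘ hξnorm x
  rw [ha, hb, ← EReal.coe_sub, ← EReal.coe_sub, EReal.coe_le_coe_iff] at key
  -- key : a - ξ xbar ≤ b - ξ x
  have hξsub : ξ x - ξ xbar = ξ (x - xbar) := by rw [map_sub]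
  have hξ₀val : ξ₀ (x - xbar) = (γ - δ) * d := by
    rw [hξ₀']; simp [hg2, hd']
  have hbound : |ξ (x - xbar) - ξ₀ (x - xbar)| ≤ (δ / 2) * d := by
    have : ξ (x - xbar) - ξ₀ (x - xbar) = (ξ - ξ₀) (x - xbar) := by simp
    rw [this, ← Real.norm_eq_abs]
    calc ‖(ξ - ξ₀) (x - xbar)‖ ≤ ‖ξ - ξ₀‖ * ‖x - xbar‖ := (ξ - ξ₀).le_opNorm _
      _ ≤ (δ / 2) * d := by
          apply mul_le_mul_of_nonneg_right _ (norm_nonneg _)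
          rw [← dist_eq_norm]; exact le_of_lt hξd
  have hlow : ξ (x - xbar) ≥ (γ - δ) * d - (δ / 2) * d := by
    have := abs_le.mp hbound
    rw [hξ₀val] at this
    linarith [this.1]
  nlinarith [key, hξsub]
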